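/- Let K be a field, q ∈ K[x_1] nonconstant, R_q = K[x_1]/⟨q⟩, and F = {f_1,...,f_s} ⊂ R_q[x_2,...,x_n] polynomials none in R_q, all with the same leading monomial x̃^α, such that f = f_1 + ... + f_s has lm(f) ≺ x̃^α. Then there exist b, b_1,...,b_{s−1} ∈ R_q, all nonzero, with b·f = Σ_{j=1}^{s−1} b_j·S(f_j, f_s), where S is the S-polynomial over R_q. Moreover, for every irreducible factor p of q, the indices can be permuted so that the lift of b to K[x_1] is not divisible by p. -/

import Mathlib

open MvPolynomial

/-- The leading monomial (exponent) of `f` with respect to the monomial order `m`,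
taken over the coefficient ring. -/
noncomputable def mdeg {σ : Type*} (m : MonomialOrder σ) {R : Type*} [CommSemiring R]
    (f : MvPolynomial σ R) : σ →₀ ℕ :=
  m.toSyn.symm (f.support.sup fun d => m.toSyn d)

/-- The leading coefficient of `f` with respect to the monomial order `m`. -/
noncomputable def lC {σ : Type*} (m : MonomialOrder σ) {R : Type*} [CommSemiring R]
    (f : MvPolynomial σ R) : R :=
  f.coeff (mdeg m f)

/-- The leading term of `f` with respect to the monomial order `m`. -/
noncomputable def lT {σ : Type*} (m : MonomialOrder σ) {R : Type*} [CommSemiring R]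
    (f : MvPolynomial σ R) : MvPolynomial σ R :=
  monomial (mdeg m f) (lC m f)

/-- `d` is a greatest common divisor of `a` and `b` (gcd's are unique up to units). -/
def IsGcd {α : Type*} [CommMonoid α] (d a b : α) : Prop :=
  d ∣ a ∧ d ∣ b ∧ ∀ e, e ∣ a → e ∣ b → e ∣ d

/-- `l` is a least common multiple of `a` and `b` (lcm's are unique up to units). -/
def IsLcm {α : Type*} [CommMonoid α] (l a b : α) : Prop :=
  a ∣ l ∧ b ∣ l ∧ ∀ e, a ∣ e → b ∣ e → l ∣ e

lemma mdeg_mem_support {σ : Type*} (m : MonomialOrder σ) {R : Type*} [CommSemiring R]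
    {f : MvPolynomial σ R} (hf : f ≠ 0) : mdeg m f ∈ f.support := by
  obtain ⟨d, hd, h⟩ := Finset.exists_mem_eq_sup f.support
    (MvPolynomial.support_nonempty.2 hf) (fun d => m.toSyn d)
  have : mdeg m f = d := by rw [mdeg, h]; exact m.toSyn.symm_apply_apply d
  rwa [this]

lemma lC_ne_zero {σ : Type*} (m : MonomialOrder σ) {R : Type*} [CommSemiring R]
    {f : MvPolynomial σ R} (hf : f ≠ 0) : lC m f ≠ 0 :=
  MvPolynomial.mem_support_iff.mp (mdeg_mem_support m hf)

lemma coeff_eq_zero_of_mdeg_lt {σ : Type*} (m : MonomialOrder σ) {R : Type*} [CommSemiring R]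
    {f : MvPolynomial σ R} {α : σ →₀ ℕ} (h : m.toSyn (mdeg m f) < m.toSyn α) :
    f.coeff α = 0 := by
  by_contra hc
  have hmem : α ∈ f.support := MvPolynomial.mem_support_iff.2 hc
  have : m.toSyn α ≤ f.support.sup fun d => m.toSyn d := Finset.le_sup hmem
  rw [mdeg, m.toSyn.apply_symm_apply] at h
  exact absurd (lt_of_le_of_lt this h) (lt_irrefl _)

lemma syzygy_key {σ K : Type*} [Field K] (q : Polynomial K) (hq : 0 < q.degree) (s : ℕ)
    (l : Fin (s + 1) → Polynomial K)
    (hl0 : ∀ j, l j ≠ 0) (hdeg : ∀ j, (l j).degree < q.degree)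
    (hsum : ∑ j, l j = 0)
    (g : Fin (s + 1) → MvPolynomial σ (Polynomial K ⧸ Ideal.span {q})) :
    ∃ (M u v w : Fin s → Polynomial K) (a : Polynomial K),
      (∀ j, IsLcm (M j) (l j.castSucc) (l (Fin.last s))) ∧
      (∀ j, M j = l j.castSucc * u j) ∧
      (∀ j, M j = l (Fin.last s) * v j) ∧
      (∀ j, u j ∣ a) ∧ (∀ e, (∀ j, u j ∣ e) → a ∣ e) ∧
      (∀ j, a = u j * w j) ∧
      (∀ p : Polynomial K, Prime p →
        (∀ j : Fin s, ∃ k, p ^ k ∣ l (Fin.last s) ∧ ¬ p ^ (k + 1) ∣ l (Fin.last s) ∧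
          p ^ k ∣ l j.castSucc) → ¬ p ∣ a) ∧
      Ideal.Quotient.mk (Ideal.span {q}) a ≠ 0 ∧
      (∀ j, Ideal.Quotient.mk (Ideal.span {q}) (w j) ≠ 0) ∧
      C (Ideal.Quotient.mk (Ideal.span {q}) a) * (∑ j, g j) =
        ∑ j, C (Ideal.Quotient.mk (Ideal.span {q}) (w j)) *
          (C (Ideal.Quotient.mk (Ideal.span {q}) (u j)) * g j.castSucc -
            C (Ideal.Quotient.mk (Ideal.span {q}) (v j)) * g (Fin.last s)) := by
  classical
  set mk := Ideal.Quotient.mk (Ideal.span {q}) with hmk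
  set L := l (Fin.last s) with hL
  set M : Fin s → Polynomial K := fun j => lcm (l j.castSucc) L with hM
  have hu : ∀ j : Fin s, ∃ c, M j = l j.castSucc * c := fun j => dvd_lcm_left _ _
  have hv : ∀ j : Fin s, ∃ c, M j = L * c := fun j => dvd_lcm_right _ _
  set u : Fin s → Polynomial K := fun j => (hu j).choose with hud
  set v : Fin s → Polynomial K := fun j => (hv j).choose with hvd
  have hMu : ∀ j, M j = l j.castSucc * u j := fun j => (hu j).choose_spec
  have hMv : ∀ j, M j = L * v j := fun j => (hv j).choose_spec
  set a : Polynomial K := (Finset.univ : Finset (Fin s)).lcm u with ha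
  have hua : ∀ j, u j ∣ a := fun j => Finset.dvd_lcm (Finset.mem_univ j)
  have halcm : ∀ e, (∀ j, u j ∣ e) → a ∣ e := fun e he => Finset.lcm_dvd fun j _ => he j
  have hw : ∀ j : Fin s, ∃ c, a = u j * c := fun j => hua j
  set w : Fin s → Polynomial K := fun j => (hw j).choose with hwd
  have haw : ∀ j, a = u j * w j := fun j => (hw j).choose_spec
  -- u j divides L
  have huL : ∀ j, u j ∣ L := by
    intro j
    have h1 : M j ∣ l j.castSucc * L := lcm_dvd (dvd_mul_right _ _) (dvd_mul_left _ _)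
    rw [hMu j] at h1
    exact (mul_dvd_mul_iff_left (hl0 j.castSucc)).mp h1
  have haL : a ∣ L := halcm L huL
  have hqndvd : ∀ x : Polynomial K, x ∣ L → mk x ≠ 0 := by
    intro x hx h0
    have hqx : q ∣ x := by
      rwa [hmk, Ideal.Quotient.eq_zero_iff_mem, Ideal.mem_span_singleton] at h0
    have : q ∣ L := hqx.trans hx
    have := Polynomial.degree_le_of_dvd this (hl0 (Fin.last s))
    exact absurd (lt_of_le_of_lt this (hdeg (Fin.last s))) (lt_irrefl _)
  have hwa : ∀ j, w j ∣ a := fun j => Dvd.intro_left _ (haw j).symm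
  refine ⟨M, u, v, w, a, ?_, hMu, hMv, hua, halcm, haw, ?_, hqndvd a haL,
    fun j => hqndvd (w j) ((hwa j).trans haL), ?_⟩
  · exact fun j => ⟨dvd_lcm_left _ _, dvd_lcm_right _ _, fun e h1 h2 => lcm_dvd h1 h2⟩
  · -- prime avoidance
    intro p hp hmin hpa
    have hpprod : p ∣ ∏ j : Fin s, u j :=
      hpa.trans (halcm _ (fun j => Finset.dvd_prod_of_mem u (Finset.mem_univ j)))
    obtain ⟨j, -, hpuj⟩ := hp.exists_mem_finset_dvd hpprod
    obtain ⟨k, hkL, hkL1, hkx⟩ := hmin j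
    set x := l j.castSucc with hx
    have hgcd : p ^ k ∣ gcd x L := dvd_gcd hkx hkL
    obtain ⟨c, hc⟩ := gcd_mul_lcm x L
    have hlcmx : lcm x L = x * u j := hMu j
    have h2 : gcd x L * u j * ↑c = L := by
      apply mul_left_cancel₀ (hl0 j.castSucc)
      rw [← hc, hlcmx]; ring
    have h3 : p ^ (k + 1) ∣ L := by
      rw [← h2, pow_succ]
      exact Dvd.dvd.mul_right (mul_dvd_mul hgcd hpuj) _
    exact hkL1 h3
  · -- main identity
    have hwvL : ∀ j : Fin s, w j * v j * L = a * l j.castSucc := by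
      intro j
      calc w j * v j * L = w j * (L * v j) := by ring
        _ = w j * (l j.castSucc * u j) := by rw [← hMv j, hMu j]
        _ = l j.castSucc * (u j * w j) := by ring
        _ = a * l j.castSucc := by rw [← haw j]; ring
    have hT : (a + ∑ j : Fin s, w j * v j) * L = 0 := by
      have : (a + ∑ j : Fin s, w j * v j) * L = a * ∑ j : Fin (s + 1), l j := by
        calc (a + ∑ j : Fin s, w j * v j) * L
            = a * L + ∑ j : Fin s, w j * v j * L := by rw [add_mul, Finset.sum_mul]
          _ = a * L + ∑ j : Fin s, a * l j.castSucc := by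
              rw [Finset.sum_congr rfl fun j _ => hwvL j]
          _ = a * ∑ j : Fin (s + 1), l j := by
              rw [Fin.sum_univ_castSucc (f := l), ← Finset.mul_sum, mul_add]; ring
      rw [this, hsum, mul_zero]
    have hT0 : a + ∑ j : Fin s, w j * v j = 0 :=
      (mul_eq_zero.mp hT).resolve_right (hl0 (Fin.last s))
    have hwv : ∑ j : Fin s, w j * v j = -a := eq_neg_of_add_eq_zero_right hT0
    have step : ∀ j : Fin s, C (mk (w j)) *
        (C (mk (u j)) * g j.castSucc - C (mk (v j)) * g (Fin.last s)) =
        C (mk a) * g j.castSucc - C (mk (w j * v j)) * g (Fin.last s) := by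
      intro j
      have h1 : (C (mk (w j)) * C (mk (u j)) : MvPolynomial σ _) = C (mk a) := by
        rw [← C_mul, ← map_mul, mul_comm, ← haw j]
      have h2 : (C (mk (w j)) * C (mk (v j)) : MvPolynomial σ _) = C (mk (w j * v j)) := by
        rw [← C_mul, ← map_mul]
      rw [← h1, ← h2]; ring
    calc C (mk a) * (∑ j, g j)
        = ∑ j : Fin s, C (mk a) * g j.castSucc + C (mk a) * g (Fin.last s) := by
          rw [Fin.sum_univ_castSucc (f := g), mul_add, Finset.mul_sum]
      _ = ∑ j : Fin s, C (mk a) * g j.castSucc -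
            C (mk (∑ j : Fin s, w j * v j)) * g (Fin.last s) := by
          rw [hwv, map_neg, map_neg]; ring
      _ = ∑ j : Fin s, C (mk a) * g j.castSucc -
            (∑ j : Fin s, C (mk (w j * v j))) * g (Fin.last s) := by
          rw [map_sum, map_sum]
      _ = ∑ j : Fin s, (C (mk a) * g j.castSucc -
            C (mk (w j * v j)) * g (Fin.last s)) := by
          rw [Finset.sum_mul]; exact (Finset.sum_sub_distrib (fun j => C (mk a) * g j.castSucc)
            (fun j => C (mk (w j * v j)) * g (Fin.last s))).symm
      _ = _ := by rw [Finset.sum_congr rfl fun j _ => (step j).symm]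

/-- **Syzygy lemma over a PQR `R_q = K[x₁]/⟨q⟩`.**  If `f_1, …, f_{s+1} ∉ R_q` all have
leading monomial `x̃^α` and `f = ∑ f_j` has `lm f ≺ x̃^α`, then there are nonzero
`b, b_j ∈ R_q` with `b·f = ∑_j b_j·S(f_j, f_{s+1})`, where (with lifts `l_j` of the
leading coefficients) `b = σ_q(a)`, `a = lcm_j(lcm(l_j,l_{s+1})/l_j)`, and moreover for
every irreducible factor `p` of `q` the indices can be permuted so that the lift `a` of
`b` is not divisible by `p`. -/
theorem syzygy_lemma_PQR {σ K : Type*} [Field K] (mo : MonomialOrder σ)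
    (q : Polynomial K) (hq : 0 < q.degree) (s : ℕ)
    (f : Fin (s + 1) → MvPolynomial σ (Polynomial K ⧸ Ideal.span {q}))
    (hfR : ∀ j, f j ∉ Set.range (C : (Polynomial K ⧸ Ideal.span {q}) →
      MvPolynomial σ (Polynomial K ⧸ Ideal.span {q})))
    (α : σ →₀ ℕ) (hα : ∀ j, mdeg mo (f j) = α)
    (hlt : mo.toSyn (mdeg mo (∑ j, f j)) < mo.toSyn α)
    (l : Fin (s + 1) → Polynomial K)
    (hl : ∀ j, (l j).degree < q.degree ∧
      Ideal.Quotient.mk (Ideal.span {q}) (l j) = lC mo (f j)) :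
    (∃ (M u v w : Fin s → Polynomial K) (a : Polynomial K),
      (∀ j, IsLcm (M j) (l j.castSucc) (l (Fin.last s))) ∧
      (∀ j, M j = l j.castSucc * u j) ∧
      (∀ j, M j = l (Fin.last s) * v j) ∧
      (∀ j, u j ∣ a) ∧ (∀ e, (∀ j, u j ∣ e) → a ∣ e) ∧
      (∀ j, a = u j * w j) ∧
      Ideal.Quotient.mk (Ideal.span {q}) a ≠ 0 ∧
      (∀ j, Ideal.Quotient.mk (Ideal.span {q}) (w j) ≠ 0) ∧
      C (Ideal.Quotient.mk (Ideal.span {q}) a) * (∑ j, f j) =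
        ∑ j, C (Ideal.Quotient.mk (Ideal.span {q}) (w j)) *
          (C (Ideal.Quotient.mk (Ideal.span {q}) (u j)) * f j.castSucc -
            C (Ideal.Quotient.mk (Ideal.span {q}) (v j)) * f (Fin.last s))) ∧
    ∀ p : Polynomial K, Irreducible p → p ∣ q →
      ∃ (π : Equiv.Perm (Fin (s + 1))) (M u v w : Fin s → Polynomial K) (a : Polynomial K),
        (∀ j, IsLcm (M j) (l (π j.castSucc)) (l (π (Fin.last s)))) ∧
        (∀ j, M j = l (π j.castSucc) * u j) ∧
        (∀ j, M j = l (π (Fin.last s)) * v j) ∧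
        (∀ j, u j ∣ a) ∧ (∀ e, (∀ j, u j ∣ e) → a ∣ e) ∧
        (∀ j, a = u j * w j) ∧
        ¬ p ∣ a ∧
        Ideal.Quotient.mk (Ideal.span {q}) a ≠ 0 ∧
        (∀ j, Ideal.Quotient.mk (Ideal.span {q}) (w j) ≠ 0) ∧
        C (Ideal.Quotient.mk (Ideal.span {q}) a) * (∑ j, f j) =
          ∑ j, C (Ideal.Quotient.mk (Ideal.span {q}) (w j)) *
            (C (Ideal.Quotient.mk (Ideal.span {q}) (u j)) * f (π j.castSucc) -
              C (Ideal.Quotient.mk (Ideal.span {q}) (v j)) * f (π (Fin.last s))) := by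
  classical
  set mk := Ideal.Quotient.mk (Ideal.span {q}) with hmkdef
  have hf0 : ∀ j, f j ≠ 0 := by
    intro j h0
    exact hfR j ⟨0, by rw [map_zero, h0]⟩
  have hlne : ∀ j, mk (l j) ≠ 0 := by
    intro j
    rw [(hl j).2]
    exact lC_ne_zero mo (hf0 j)
  have hl0 : ∀ j, l j ≠ 0 := by
    intro j h0
    exact hlne j (by rw [h0, map_zero])
  have hdeg : ∀ j, (l j).degree < q.degree := fun j => (hl j).1
  have hsum : ∑ j, l j = 0 := by
    have hc : (∑ j, f j).coeff α = 0 := coeff_eq_zero_of_mdeg_lt mo hlt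
    have hc2 : ∑ j, (f j).coeff α = 0 := by
      rw [← hc]; simp [MvPolynomial.coeff_sum]
    have hms : mk (∑ j, l j) = 0 := by
      rw [map_sum]
      calc ∑ j, mk (l j) = ∑ j, (f j).coeff α := by
            refine Finset.sum_congr rfl fun j _ => ?_
            rw [(hl j).2, lC, hα j]
        _ = 0 := hc2
    by_contra h0
    rw [hmkdef, Ideal.Quotient.eq_zero_iff_mem, Ideal.mem_span_singleton] at hms
    have hlt2 : (∑ j, l j).degree < q.degree := by
      apply lt_of_le_of_lt (Polynomial.degree_sum_le _ _)
      rw [Finset.sup_lt_iff (lt_of_lt_of_le (by exact WithBot.bot_lt_coe 0) hq.le)]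
      exact fun j _ => hdeg j
    exact absurd (lt_of_le_of_lt (Polynomial.degree_le_of_dvd hms h0) hlt2) (lt_irrefl _)
  constructor
  · obtain ⟨M, u, v, w, a, h1, h2, h3, h4, h5, h6, _, h8, h9, h10⟩ :=
      syzygy_key q hq s l hl0 hdeg hsum f
    exact ⟨M, u, v, w, a, h1, h2, h3, h4, h5, h6, h8, h9, h10⟩
  · intro p hp hpq
    have hprime : Prime p := hp.prime
    obtain ⟨i, -, hi⟩ := Finset.exists_min_image Finset.univ
      (fun j => multiplicity p (l j)) ⟨Fin.last s, Finset.mem_univ _⟩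
    set π : Equiv.Perm (Fin (s + 1)) := Equiv.swap (Fin.last s) i with hπ
    have hπlast : π (Fin.last s) = i := Equiv.swap_apply_left _ _
    have hsum' : ∑ j, l (π j) = 0 := by rw [Equiv.sum_comp π l, hsum]
    obtain ⟨M, u, v, w, a, h1, h2, h3, h4, h5, h6, h7, h8, h9, h10⟩ :=
      syzygy_key q hq s (fun j => l (π j)) (fun j => hl0 _) (fun j => hdeg _) hsum'
        (fun j => f (π j))
    refine ⟨π, M, u, v, w, a, h1, h2, h3, h4, h5, h6, ?_, h8, h9, ?_⟩
    · apply h7 p hprime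
      intro j
      refine ⟨multiplicity p (l i), ?_, ?_, ?_⟩
      · rw [hπlast]; exact pow_multiplicity_dvd p (l i)
      · rw [hπlast]
        exact (FiniteMultiplicity.of_not_isUnit hprime.not_isUnit
          (hl0 i)).not_pow_dvd_of_multiplicity_lt (Nat.lt_succ_self _)
      · exact (pow_dvd_pow p (hi _ (Finset.mem_univ _))).trans (pow_multiplicity_dvd p _)
    · rw [← Equiv.sum_comp π f]
      exact h10
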